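/- arXiv:2305.05348 — 2 statements merged into one kernel-verified Lean document; each statement's English description precedes it below -/
import Mathlib

section
/- Let ĥ ∈ ℂ^n, Ẑ ∈ ℂ^{m×n}, v ∈ ℂ^m with all entries of unit modulus, w ∈ ℂ^n, and ε_d, ε_c ≥ 0. Then the infimum of |(ĥ + Δh)^H w + v^H(Ẑ + ΔZ)w| over all Δh with ‖Δh‖₂ ≤ ε_d and ΔZ with ‖ΔZ‖_F ≤ ε_c equals max{ |(ĥ^H + v^H Ẑ)w| − (ε_d + √m ε_c)‖w‖₂, 0 }. -/
noncomputable def vnorm {n : ℕ} (x : Fin n → ℂ) : ℝ :=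
  Real.sqrt (∑ i, ‖x i‖ ^ 2)

noncomputable def fnorm {m n : ℕ} (Z : Fin m → Fin n → ℂ) : ℝ :=
  Real.sqrt (∑ i, ∑ j, ‖Z i j‖ ^ 2)

noncomputable def dotH {n : ℕ} (a w : Fin n → ℂ) : ℂ :=
  ∑ i, (starRingEnd ℂ) (a i) * w i

noncomputable def quadH {m n : ℕ} (v : Fin m → ℂ) (Z : Fin m → Fin n → ℂ)
    (w : Fin n → ℂ) : ℂ :=
  ∑ i, ∑ j, (starRingEnd ℂ) (v i) * Z i j * w j

lemma vnorm_nonneg {n : ℕ} (x : Fin n → ℂ) : 0 ≤ vnorm x := Real.sqrt_nonneg _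

lemma fnorm_nonneg {m n : ℕ} (Z : Fin m → Fin n → ℂ) : 0 ≤ fnorm Z := Real.sqrt_nonneg _

lemma vnorm_sq {n : ℕ} (x : Fin n → ℂ) : vnorm x ^ 2 = ∑ i, ‖x i‖ ^ 2 :=
  Real.sq_sqrt (Finset.sum_nonneg fun _ _ => sq_nonneg _)

lemma vnorm_zero {n : ℕ} : vnorm (0 : Fin n → ℂ) = 0 := by simp [vnorm]

lemma fnorm_zero {m n : ℕ} : fnorm (0 : Fin m → Fin n → ℂ) = 0 := by simp [fnorm]

lemma vnorm_eq_zero {n : ℕ} {w : Fin n → ℂ} (h : vnorm w = 0) : w = 0 := by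
  unfold vnorm at h
  have hsum : ∑ i, ‖w i‖ ^ 2 = 0 := by
    have h0 : (0:ℝ) ≤ ∑ i, ‖w i‖ ^ 2 := Finset.sum_nonneg fun _ _ => sq_nonneg _
    nlinarith [Real.sq_sqrt h0, h]
  funext i
  have := (Finset.sum_eq_zero_iff_of_nonneg (fun _ _ => sq_nonneg _)).mp hsum i (Finset.mem_univ i)
  have : ‖w i‖ = 0 := by nlinarith [norm_nonneg (w i)]
  simpa using norm_eq_zero.mp this

lemma cs_sum {n : ℕ} (a b : Fin n → ℝ) (ha : ∀ i, 0 ≤ a i) (hb : ∀ i, 0 ≤ b i) :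
    ∑ i, a i * b i ≤ Real.sqrt (∑ i, a i ^ 2) * Real.sqrt (∑ i, b i ^ 2) := by
  have h := Finset.sum_mul_sq_le_sq_mul_sq Finset.univ a b
  have h0 : (0:ℝ) ≤ ∑ i, a i * b i := Finset.sum_nonneg fun i _ => mul_nonneg (ha i) (hb i)
  calc ∑ i, a i * b i = Real.sqrt ((∑ i, a i * b i) ^ 2) := (Real.sqrt_sq h0).symm
    _ ≤ Real.sqrt ((∑ i, a i ^ 2) * ∑ i, b i ^ 2) := Real.sqrt_le_sqrt h
    _ = _ := Real.sqrt_mul (Finset.sum_nonneg fun i _ => sq_nonneg _) _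

lemma abs_dotH_le {n : ℕ} (a w : Fin n → ℂ) :
    ‖dotH a w‖ ≤ vnorm a * vnorm w := by
  have h1 : ‖dotH a w‖ ≤ ∑ i, ‖a i‖ * ‖w i‖ := by
    refine (norm_sum_le _ _).trans (le_of_eq ?_)
    refine Finset.sum_congr rfl fun i _ => ?_
    rw [norm_mul, Complex.norm_conj]
  refine h1.trans ?_
  unfold vnorm
  exact cs_sum _ _ (fun i => norm_nonneg _) (fun i => norm_nonneg _)

lemma sum_le_sqrt_card_mul {m : ℕ} (f : Fin m → ℝ) (hf : ∀ i, 0 ≤ f i) :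
    ∑ i, f i ≤ Real.sqrt m * Real.sqrt (∑ i, f i ^ 2) := by
  have h := sq_sum_le_card_mul_sum_sq (s := Finset.univ) (f := f)
  have h0 : (0:ℝ) ≤ ∑ i, f i := Finset.sum_nonneg fun i _ => hf i
  have h2 := Real.sqrt_le_sqrt h
  rw [Real.sqrt_sq h0] at h2
  refine h2.trans (le_of_eq ?_)
  rw [Real.sqrt_mul (by positivity)]
  simp

lemma abs_quadH_le {m n : ℕ} (v : Fin m → ℂ) (hv : ∀ i, ‖v i‖ = 1)
    (Z : Fin m → Fin n → ℂ) (w : Fin n → ℂ) :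
    ‖quadH v Z w‖ ≤ Real.sqrt m * fnorm Z * vnorm w := by
  have hrow : ∀ i, ‖∑ j, Z i j * w j‖ ≤ vnorm (Z i) * vnorm w := by
    intro i
    have : (∑ j, Z i j * w j) = dotH (fun j => (starRingEnd ℂ) (Z i j)) w := by
      unfold dotH; simp
    rw [this]
    refine (abs_dotH_le _ _).trans (le_of_eq ?_)
    congr 1
    unfold vnorm
    simp [Complex.norm_conj]
  have hrw : quadH v Z w = ∑ i, (starRingEnd ℂ) (v i) * (∑ j, Z i j * w j) := by
    unfold quadH
    refine Finset.sum_congr rfl fun i _ => ?_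
    rw [Finset.mul_sum]
    exact Finset.sum_congr rfl fun j _ => by ring
  have h1 : ‖quadH v Z w‖ ≤ ∑ i, vnorm (Z i) * vnorm w := by
    rw [hrw]
    refine (norm_sum_le _ _).trans (Finset.sum_le_sum fun i _ => ?_)
    rw [norm_mul, Complex.norm_conj, hv, one_mul]
    exact hrow i
  rw [← Finset.sum_mul] at h1
  refine h1.trans ?_
  have h2 : ∑ i, vnorm (Z i) ≤ Real.sqrt m * fnorm Z := by
    have h3 := sum_le_sqrt_card_mul (fun i => vnorm (Z i)) (fun i => vnorm_nonneg _)
    simp only [vnorm_sq] at h3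
    exact h3
  exact mul_le_mul_of_nonneg_right h2 (vnorm_nonneg w)

lemma dotH_add {n : ℕ} (a b w : Fin n → ℂ) : dotH (a + b) w = dotH a w + dotH b w := by
  simp [dotH, map_add, add_mul, Finset.sum_add_distrib]

lemma quadH_add {m n : ℕ} (v : Fin m → ℂ) (Y Z : Fin m → Fin n → ℂ) (w : Fin n → ℂ) :
    quadH v (fun i j => Y i j + Z i j) w = quadH v Y w + quadH v Z w := by
  simp [quadH, mul_add, add_mul, Finset.sum_add_distrib]

lemma vnorm_smul {n : ℕ} (c : ℂ) (x : Fin n → ℂ) :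
    vnorm (fun i => c * x i) = ‖c‖ * vnorm x := by
  unfold vnorm
  simp only [norm_mul, mul_pow, ← Finset.mul_sum]
  rw [Real.sqrt_mul (sq_nonneg _), Real.sqrt_sq (norm_nonneg _)]

lemma conj_mul_self (z : ℂ) : (starRingEnd ℂ) z * z = ((‖z‖ : ℝ) : ℂ) ^ 2 := by
  rw [Complex.conj_mul']

lemma sum_conj_mul_self {n : ℕ} (w : Fin n → ℂ) :
    ∑ j, (starRingEnd ℂ) (w j) * w j = ((vnorm w ^ 2 : ℝ) : ℂ) := by
  simp only [conj_mul_self]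
  rw [vnorm, Real.sq_sqrt (Finset.sum_nonneg fun i _ => sq_nonneg _)]
  push_cast
  rfl

lemma fnorm_special {m n : ℕ} (k : ℂ) (v : Fin m → ℂ) (hv : ∀ i, ‖v i‖ = 1)
    (w : Fin n → ℂ) :
    fnorm (fun i j => k * v i * (starRingEnd ℂ) (w j))
      = Real.sqrt m * ‖k‖ * vnorm w := by
  have h : ∀ (i : Fin m) (j : Fin n), ‖k * v i * (starRingEnd ℂ) (w j)‖
      = ‖k‖ * ‖w j‖ := by
    intro i j
    rw [norm_mul, norm_mul, Complex.norm_conj, hv, mul_one]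
  unfold fnorm vnorm
  simp only [h, mul_pow, ← Finset.mul_sum, Finset.sum_const, Finset.card_univ,
    Fintype.card_fin, nsmul_eq_mul]
  rw [Real.sqrt_mul (by positivity), Real.sqrt_mul (by positivity : (0:ℝ) ≤ (m:ℝ)),
    Real.sqrt_sq (norm_nonneg _)]
  ring

/-- Lemma 1, first claim: the worst-case (infimum) value of
`|(hhat + Δh)^H w + v^H (Zhat + ΔZ) w|` over `‖Δh‖₂ ≤ ε_d`, `‖ΔZ‖_F ≤ ε_c` equals
`max { |(hhat^H + v^H Zhat) w| − (ε_d + √m ε_c) ‖w‖₂ , 0 }`. -/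
theorem stmt2 {m n : ℕ} (hhat : Fin n → ℂ) (Zhat : Fin m → Fin n → ℂ)
    (v : Fin m → ℂ) (hv : ∀ i, ‖v i‖ = 1)
    (w : Fin n → ℂ) (εd εc : ℝ) (hεd : 0 ≤ εd) (hεc : 0 ≤ εc) :
    sInf { r : ℝ | ∃ (Δh : Fin n → ℂ) (ΔZ : Fin m → Fin n → ℂ),
        vnorm Δh ≤ εd ∧ fnorm ΔZ ≤ εc ∧
        r = ‖dotH (hhat + Δh) w + quadH v (fun i j => Zhat i j + ΔZ i j) w‖ }
      = max (‖dotH hhat w + quadH v Zhat w‖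
              - (εd + Real.sqrt m * εc) * vnorm w) 0 := by
  set S := { r : ℝ | ∃ (Δh : Fin n → ℂ) (ΔZ : Fin m → Fin n → ℂ),
        vnorm Δh ≤ εd ∧ fnorm ΔZ ≤ εc ∧
        r = ‖dotH (hhat + Δh) w + quadH v (fun i j => Zhat i j + ΔZ i j) w‖ }
    with hS
  set A : ℂ := dotH hhat w + quadH v Zhat w with hA
  set W : ℝ := vnorm w with hWdef
  set ρ : ℝ := (εd + Real.sqrt m * εc) * W with hρ
  have hW0 : 0 ≤ W := vnorm_nonneg w
  have hρ0 : 0 ≤ ρ := by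
    apply mul_nonneg _ hW0
    positivity
  -- every member of S rewrites as |A + D|
  have hmem : ∀ r ∈ S, ∃ (Δh : Fin n → ℂ) (ΔZ : Fin m → Fin n → ℂ),
      vnorm Δh ≤ εd ∧ fnorm ΔZ ≤ εc ∧
      r = ‖A + (dotH Δh w + quadH v ΔZ w)‖ := by
    rintro r ⟨Δh, ΔZ, h1, h2, h3⟩
    refine ⟨Δh, ΔZ, h1, h2, ?_⟩
    rw [h3, dotH_add, quadH_add]
    rw [hA]; ring_nf
  -- lower bound: max(...) ≤ every element of S
  have hlb : ∀ r ∈ S, max (‖A‖ - ρ) 0 ≤ r := by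
    intro r hr
    obtain ⟨Δh, ΔZ, h1, h2, h3⟩ := hmem r hr
    refine max_le ?_ (h3 ▸ norm_nonneg _)
    set D := dotH Δh w + quadH v ΔZ w with hDdef
    have hD : ‖D‖ ≤ ρ := by
      refine (norm_add_le _ _).trans ?_
      have e1 : ‖dotH Δh w‖ ≤ εd * W :=
        (abs_dotH_le Δh w).trans (mul_le_mul_of_nonneg_right h1 hW0)
      have e2 : ‖quadH v ΔZ w‖ ≤ Real.sqrt m * εc * W := by
        refine (abs_quadH_le v hv ΔZ w).trans ?_
        have h4 : Real.sqrt m * fnorm ΔZ ≤ Real.sqrt m * εc :=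
          mul_le_mul_of_nonneg_left h2 (Real.sqrt_nonneg _)
        exact mul_le_mul_of_nonneg_right h4 hW0
      rw [hρ]; nlinarith
    have habs : ‖A‖ ≤ r + ρ := by
      have h5 : ‖A‖ ≤ ‖A + D‖ + ‖D‖ := by
        calc ‖A‖ = ‖(A + D) + -D‖ := by ring_nf
          _ ≤ ‖A + D‖ + ‖-D‖ := norm_add_le _ _
          _ = ‖A + D‖ + ‖D‖ := by rw [norm_neg]
      rw [← h3] at h5
      linarith
    linarith
  -- S nonempty
  have hne : S.Nonempty := by
    refine ⟨‖A‖, 0, 0, by simp [vnorm_zero, hεd], by simp [fnorm_zero, hεc], ?_⟩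
    have e1 : hhat + 0 = hhat := by simp
    have e2 : (fun i j => Zhat i j + (0 : Fin m → Fin n → ℂ) i j) = Zhat := by
      funext i j; simp
    rw [e1, e2, hA]
  have hbdd : BddBelow S := ⟨0, fun r hr => by
    obtain ⟨_, _, _, _, h3⟩ := hr; rw [h3]; exact norm_nonneg _⟩
  -- the max value is attained
  have hattain : max (‖A‖ - ρ) 0 ∈ S := by
    rcases eq_or_lt_of_le hW0 with hWz | hWpos
    · -- W = 0, so w = 0
      have hw : w = 0 := by
        apply vnorm_eq_zero
        rw [← hWdef]; exact hWz.symm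
      have hA0 : A = 0 := by simp [hA, dotH, quadH, hw]
      have hρz : ρ = 0 := by rw [hρ, hWdef, hw, vnorm_zero, mul_zero]
      refine ⟨0, 0, by simp [vnorm_zero, hεd], by simp [fnorm_zero, hεc], ?_⟩
      rw [hA0, hρz]
      simp [dotH, quadH, hw]
    · -- main case: W > 0
      set e : ℂ := if A = 0 then 1 else A / ((‖A‖ : ℝ) : ℂ) with he
      have habse : ‖e‖ = 1 := by
        rw [he]
        split_ifs with h
        · simp
        · rw [norm_div, Complex.norm_real, Real.norm_eq_abs, abs_of_nonneg (norm_nonneg A),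
            div_self (norm_ne_zero_iff.mpr h)]
      have heA : A = ((‖A‖ : ℝ) : ℂ) * e := by
        rw [he]
        split_ifs with h
        · simp [h]
        · rw [mul_div_cancel₀]
          simp [norm_eq_zero, h]
      set t : ℝ := if ρ ≤ ‖A‖ then 1 else ‖A‖ / ρ with ht
      have ht0 : 0 ≤ t := by
        rw [ht]; split_ifs
        · norm_num
        · positivity
      have ht1 : t ≤ 1 := by
        rw [ht]; split_ifs with h
        · exact le_refl 1
        · push_neg at h
          have hρpos : 0 < ρ := lt_of_le_of_lt (norm_nonneg A) h
          rw [div_le_one hρpos]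
          linarith
      have htρ : ‖A‖ - t * ρ = max (‖A‖ - ρ) 0 := by
        rw [ht]; split_ifs with h
        · rw [one_mul, max_eq_left (by linarith)]
        · push_neg at h
          have hρpos : 0 < ρ := lt_of_le_of_lt (norm_nonneg A) h
          rw [div_mul_cancel₀ _ (ne_of_gt hρpos), sub_self,
            max_eq_right (by linarith)]
      have hWne : W ≠ 0 := ne_of_gt hWpos
      set c1 : ℝ := t * εd / W with hc1
      set c2 : ℝ := t * εc / (Real.sqrt m * W) with hc2
      have hc1n : 0 ≤ c1 := by rw [hc1]; positivity
      have hc2n : 0 ≤ c2 := by rw [hc2]; positivity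
      set Δh : Fin n → ℂ := fun i => ((-(c1:ℂ)) * (starRingEnd ℂ) e) * w i with hΔh
      set ΔZ : Fin m → Fin n → ℂ :=
        fun i j => ((-(c2:ℂ)) * e) * v i * (starRingEnd ℂ) (w j) with hΔZ
      have hvn : vnorm Δh = t * εd := by
        rw [hΔh, vnorm_smul, norm_mul, norm_neg, Complex.norm_real, Real.norm_eq_abs,
          Complex.norm_conj, habse, abs_of_nonneg hc1n, mul_one, hc1, ← hWdef,
          div_mul_cancel₀ _ hWne]
      have hvnb : vnorm Δh ≤ εd := by
        rw [hvn]
        calc t * εd ≤ 1 * εd := mul_le_mul_of_nonneg_right ht1 hεd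
          _ = εd := one_mul εd
      have hfval : fnorm ΔZ = Real.sqrt m * c2 * W := by
        rw [hΔZ, fnorm_special _ v hv w, norm_mul, norm_neg, Complex.norm_real, Real.norm_eq_abs,
          habse, abs_of_nonneg hc2n, mul_one, ← hWdef]
      have hfnb : fnorm ΔZ ≤ εc := by
        rw [hfval]
        rcases Nat.eq_zero_or_pos m with hm | hm
        · subst hm; simp [hεc]
        · have hsm : 0 < Real.sqrt m := Real.sqrt_pos.mpr (by positivity)
          have heq : Real.sqrt m * c2 * W = t * εc := by
            rw [hc2]; field_simp
          rw [heq]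
          calc t * εc ≤ 1 * εc := mul_le_mul_of_nonneg_right ht1 hεc
            _ = εc := one_mul εc
      have hww := sum_conj_mul_self w
      rw [← hWdef] at hww
      -- value of dotH Δh w
      have hdot : dotH Δh w = -(((t * εd * W : ℝ) : ℂ)) * e := by
        rw [hΔh]
        unfold dotH
        have hterm : ∀ i, (starRingEnd ℂ) (((-(c1:ℂ)) * (starRingEnd ℂ) e) * w i) * w i
            = ((-(c1:ℂ)) * e) * ((starRingEnd ℂ) (w i) * w i) := by
          intro i
          simp only [map_mul, map_neg, Complex.conj_conj, Complex.conj_ofReal]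
          ring
        rw [Finset.sum_congr rfl (fun i _ => hterm i), ← Finset.mul_sum, hww]
        have hre : c1 * W^2 = t * εd * W := by
          rw [hc1]; field_simp
        push_cast [← hre]
        ring
      -- value of quadH v ΔZ w
      have hre2 : (m:ℝ) * (c2 * W^2) = t * (Real.sqrt m * εc) * W := by
        rcases Nat.eq_zero_or_pos m with hm | hm
        · subst hm
          simp [hc2, Real.sqrt_zero]
        · have hsm : 0 < Real.sqrt m := Real.sqrt_pos.mpr (by positivity)
          have hmm : Real.sqrt m * Real.sqrt m = (m:ℝ) :=
            Real.mul_self_sqrt (by positivity)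
          rw [hc2]
          field_simp
          linear_combination (-(t*εc)) * hmm
      have hquad : quadH v ΔZ w = -(((t * (Real.sqrt m * εc) * W : ℝ) : ℂ)) * e := by
        rw [hΔZ]
        unfold quadH
        have hvi : ∀ i, (starRingEnd ℂ) (v i) * v i = 1 := by
          intro i
          rw [conj_mul_self, hv i]
          norm_num
        have hterm : ∀ (i : Fin m) (j : Fin n),
            (starRingEnd ℂ) (v i) * ((((-(c2:ℂ)) * e) * v i) * (starRingEnd ℂ) (w j)) * w j
            = ((-(c2:ℂ)) * e) * (((starRingEnd ℂ) (v i)) * v i)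
              * ((starRingEnd ℂ) (w j) * w j) := by
          intro i j; ring
        calc (∑ i, ∑ j, (starRingEnd ℂ) (v i) * ((((-(c2:ℂ)) * e) * v i) * (starRingEnd ℂ) (w j)) * w j)
            = ∑ i : Fin m, ∑ j, ((-(c2:ℂ)) * e) * (((starRingEnd ℂ) (v i)) * v i)
              * ((starRingEnd ℂ) (w j) * w j) := by
              exact Finset.sum_congr rfl fun i _ => Finset.sum_congr rfl fun j _ => hterm i j
          _ = ∑ i : Fin m, ((-(c2:ℂ)) * e) * ∑ j, (starRingEnd ℂ) (w j) * w j := by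
              refine Finset.sum_congr rfl fun i _ => ?_
              rw [hvi i, mul_one, Finset.mul_sum]
          _ = (m : ℂ) * (((-(c2:ℂ)) * e) * ((W^2 : ℝ) : ℂ)) := by
              rw [hww, Finset.sum_const, Finset.card_univ, Fintype.card_fin, nsmul_eq_mul]
          _ = -(((t * (Real.sqrt m * εc) * W : ℝ) : ℂ)) * e := by
              push_cast [← hre2]
              ring
      -- assemble
      refine ⟨Δh, ΔZ, hvnb, hfnb, ?_⟩
      have expand : dotH (hhat + Δh) w + quadH v (fun i j => Zhat i j + ΔZ i j) w
          = (((‖A‖ - t * ρ : ℝ)) : ℂ) * e := by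
        rw [dotH_add, quadH_add, hdot, hquad]
        have hAe : dotH hhat w + quadH v Zhat w = ((‖A‖ : ℝ) : ℂ) * e := by
          rw [← hA]; exact heA
        have hρc : (((t * ρ : ℝ)) : ℂ) = ((t * εd * W : ℝ) : ℂ)
            + ((t * (Real.sqrt m * εc) * W : ℝ) : ℂ) := by
          push_cast [hρ]
          ring
        push_cast [hρ] at *
        rw [show (dotH hhat w + -(↑t * ↑εd * ↑W) * e + (quadH v Zhat w + -(↑t * (↑(Real.sqrt m) * ↑εc) * ↑W) * e))
            = (dotH hhat w + quadH v Zhat w) + (-(↑t * ↑εd * ↑W) * e + -(↑t * (↑(Real.sqrt m) * ↑εc) * ↑W) * e) from by ring,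
          hAe]
        ring
      rw [expand, norm_mul, habse, mul_one, Complex.norm_real, Real.norm_eq_abs,
        abs_of_nonneg (htρ ▸ le_max_right _ 0), htρ]
  apply le_antisymm
  · exact csInf_le hbdd hattain
  · exact le_csInf hne hlb
end

section
/- Let h ∈ ℂ^n, v ∈ ℂ^m with unit-modulus entries, Z ∈ ℂ^{m×n}, w ∈ ℂ^n nonzero, ε_d, ε_c > 0, and suppose |(h^H + v^H Z)w| < (ε_d + √m ε_c)‖w‖₂. Define ĥ = h + Z^H v (so (h^H + v^H Z)w = ĥ^H w), Δh = −(ε_d/(ε_d + √m ε_c)) · (w w^H ĥ)/‖w‖₂², and ΔZ = −(ε_c/(√m ε_d + m ε_c)) · (v ĥ^H w w^H)/‖w‖₂². Then ‖Δh‖₂ ≤ ε_d, ‖ΔZ‖_F ≤ ε_c, and ((h + Δh)^H + v^H(Z + ΔZ)) w = 0. -/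
lemma conj_dotH {n : ℕ} (a w : Fin n → ℂ) :
    (starRingEnd ℂ) (dotH a w) = dotH w a := by
  unfold dotH
  simp [map_sum, map_mul, mul_comm]

/-- Second case of Lemma 1: when the nominal signal magnitude is smaller than
the uncertainty radius, the explicit feasible perturbations drive the
effective channel–precoder product exactly to zero. -/
theorem stmt13 {m n : ℕ} (hm : 0 < m) (h : Fin n → ℂ)
    (v : Fin m → ℂ) (hv : ∀ i, ‖v i‖ = 1)
    (Z : Fin m → Fin n → ℂ) (w : Fin n → ℂ) (hw : w ≠ 0)
    (εd εc : ℝ) (hεd : 0 < εd) (hεc : 0 < εc)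
    (hsmall : ‖dotH h w + quadH v Z w‖
        < (εd + Real.sqrt m * εc) * vnorm w)
    (hhat : Fin n → ℂ)
    (hhat_def : hhat = fun j => h j + ∑ i, (starRingEnd ℂ) (Z i j) * v i)
    (Δh : Fin n → ℂ)
    (hΔh : Δh = fun j =>
      -((εd / (εd + Real.sqrt m * εc)) : ℂ) * (w j * dotH w hhat)
        / ((vnorm w : ℂ) ^ 2))
    (ΔZ : Fin m → Fin n → ℂ)
    (hΔZ : ΔZ = fun i j =>
      -((εc / (Real.sqrt m * εd + m * εc)) : ℂ)
        * (v i * dotH hhat w * (starRingEnd ℂ) (w j)) / ((vnorm w : ℂ) ^ 2)) :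
    vnorm Δh ≤ εd ∧ fnorm ΔZ ≤ εc ∧
    dotH (h + Δh) w + quadH v (fun i j => Z i j + ΔZ i j) w = 0 := by
  -- basic constants
  set W : ℝ := vnorm w with hWdef
  have hsum_nonneg : (0:ℝ) ≤ ∑ j, ‖w j‖ ^ 2 :=
    Finset.sum_nonneg fun j _ => sq_nonneg _
  have hW2 : W ^ 2 = ∑ j, ‖w j‖ ^ 2 := Real.sq_sqrt hsum_nonneg
  have hWpos : 0 < W := by
    have : ∃ j, w j ≠ 0 := by
      by_contra hc
      push_neg at hc
      exact hw (funext hc)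
    obtain ⟨j, hj⟩ := this
    have : 0 < ∑ k, ‖w k‖ ^ 2 :=
      Finset.sum_pos' (fun k _ => sq_nonneg _)
        ⟨j, Finset.mem_univ j, pow_pos (norm_pos_iff.mpr hj) 2⟩
    exact Real.sqrt_pos.mpr this
  have hWne : (W:ℂ) ≠ 0 := by exact_mod_cast hWpos.ne'
  have hsqm : 0 < Real.sqrt m := Real.sqrt_pos.mpr (by exact_mod_cast hm)
  set D : ℝ := εd + Real.sqrt m * εc with hDdef
  have hD : 0 < D := by positivity
  have hden2 : Real.sqrt m * εd + (m:ℝ) * εc = Real.sqrt m * D := by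
    rw [hDdef, mul_add, ← mul_assoc, Real.mul_self_sqrt (by positivity)]
  -- key sum: ∑ conj(w j) * w j = W^2
  have hkey : ∑ j, (starRingEnd ℂ) (w j) * w j = ((W:ℂ))^2 := by
    have : ∀ j, (starRingEnd ℂ) (w j) * w j = ((‖w j‖ ^ 2 : ℝ) : ℂ) := by
      intro j
      rw [mul_comm, Complex.mul_conj, Complex.sq_norm]
    rw [Finset.sum_congr rfl fun j _ => this j, ← Complex.ofReal_sum, ← hW2]
    push_cast
    ring
  -- the scalar s
  set s : ℂ := dotH hhat w with hsdef
  have hA : dotH h w + quadH v Z w = s := by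
    rw [hsdef, hhat_def]
    unfold dotH quadH
    rw [Finset.sum_comm]
    simp only [map_add, map_sum, map_mul]
    rw [← Finset.sum_add_distrib]
    apply Finset.sum_congr rfl
    intro j _
    simp only [Complex.conj_conj, add_mul, Finset.sum_mul]
    congr 1
    apply Finset.sum_congr rfl
    intro i _
    ring
  have habs : ‖s‖ < D * W := by rw [← hA]; exact hsmall
  have hconj_s : (starRingEnd ℂ) (dotH w hhat) = s := conj_dotH w hhat
  set c1 : ℝ := εd / D with hc1
  set c2 : ℝ := εc / (Real.sqrt m * εd + (m:ℝ) * εc) with hc2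
  have hc1pos : 0 < c1 := div_pos hεd hD
  have hc2pos : 0 < c2 := div_pos hεc (by rw [hden2]; positivity)
  have hmm : Real.sqrt m * Real.sqrt m = (m:ℝ) := Real.mul_self_sqrt (by positivity)
  have hone : c1 + (m:ℝ) * c2 = 1 := by
    rw [hc1, hc2, hden2]
    field_simp
    nlinarith [hmm]
  have hv1 : ∀ i, (starRingEnd ℂ) (v i) * v i = 1 := by
    intro i
    rw [mul_comm, Complex.mul_conj]
    have : Complex.normSq (v i) = 1 := by
      rw [← Complex.sq_norm, hv i]; norm_num
    rw [this]; norm_num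
  -- abs of s
  have habs_conj : ‖dotH w hhat‖ = ‖s‖ := by
    rw [← hconj_s]
    exact (Complex.norm_conj _).symm
  have hDC : ((D:ℝ):ℂ) = (εd:ℂ) + (Real.sqrt m : ℂ) * (εc:ℂ) := by
    rw [hDdef]; push_cast; ring
  have hEpos : 0 < Real.sqrt m * εd + (m:ℝ) * εc := by rw [hden2]; positivity
  have hEC : ((Real.sqrt m * εd + (m:ℝ) * εc : ℝ):ℂ)
      = (Real.sqrt m : ℂ) * (εd:ℂ) + (m:ℂ) * (εc:ℂ) := by push_cast; ring
  -- the three computed quantities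
  have hΔdot : dotH Δh w = -(c1:ℂ) * s := by
    unfold dotH
    rw [hΔh]
    have e : ∀ j, (starRingEnd ℂ)
        (-((εd / (εd + Real.sqrt m * εc)) : ℂ) * (w j * dotH w hhat)
          / ((W : ℂ) ^ 2)) * w j
        = (-(c1:ℂ) * s / (W:ℂ)^2) * ((starRingEnd ℂ) (w j) * w j) := by
      intro j
      simp only [map_div₀, map_mul, map_neg, map_add, map_pow,
        Complex.conj_ofReal, hconj_s]
      push_cast [hc1, hDdef]
      ring
    rw [Finset.sum_congr rfl fun j _ => e j, ← Finset.mul_sum, hkey]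
    rw [div_mul_cancel₀ _ (pow_ne_zero 2 hWne)]
  have hΔquad : quadH v ΔZ w = -((m:ℂ) * (c2:ℂ)) * s := by
    unfold quadH
    rw [hΔZ]
    have e : ∀ i, ∑ j, (starRingEnd ℂ) (v i) *
        (-((εc / (Real.sqrt m * εd + m * εc)) : ℂ)
          * (v i * dotH hhat w * (starRingEnd ℂ) (w j)) / ((W : ℂ) ^ 2)) * w j
        = ((starRingEnd ℂ) (v i) * v i) *
            ((-(c2:ℂ) * s / (W:ℂ)^2) * ∑ j, (starRingEnd ℂ) (w j) * w j) := by
      intro i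
      simp only [Finset.mul_sum]
      apply Finset.sum_congr rfl
      intro j _
      push_cast [hc2, hsdef]
      ring
    rw [Finset.sum_congr rfl fun i _ => e i]
    simp only [hv1, one_mul]
    rw [Finset.sum_const, Finset.card_univ, Fintype.card_fin, hkey, nsmul_eq_mul]
    rw [div_mul_cancel₀ _ (pow_ne_zero 2 hWne)]
    ring
  -- the zero equation
  have hzero : dotH (h + Δh) w + quadH v (fun i j => Z i j + ΔZ i j) w = 0 := by
    have hadd1 : dotH (h + Δh) w = dotH h w + dotH Δh w := by
      unfold dotH
      rw [← Finset.sum_add_distrib]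
      apply Finset.sum_congr rfl
      intro j _
      simp [add_mul]
    have hadd2 : quadH v (fun i j => Z i j + ΔZ i j) w = quadH v Z w + quadH v ΔZ w := by
      unfold quadH
      rw [← Finset.sum_add_distrib]
      apply Finset.sum_congr rfl
      intro i _
      rw [← Finset.sum_add_distrib]
      apply Finset.sum_congr rfl
      intro j _
      ring
    rw [hadd1, hadd2, hΔdot, hΔquad]
    have : dotH h w + quadH v Z w = s := hA
    have hones : ((c1:ℂ) + (m:ℂ) * (c2:ℂ)) = 1 := by
      exact_mod_cast congrArg (Complex.ofReal) hone
    calc dotH h w + -(c1:ℂ) * s + (quadH v Z w + -((m:ℂ) * (c2:ℂ)) * s)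
        = (dotH h w + quadH v Z w) - ((c1:ℂ) + (m:ℂ) * (c2:ℂ)) * s := by ring
      _ = s - 1 * s := by rw [this, hones]
      _ = 0 := by ring
  -- first norm bound
  have habsΔh : ∀ j, ‖Δh j‖
      = c1 * ‖w j‖ * ‖s‖ / W^2 := by
    intro j
    rw [hΔh]
    simp only [← hDC, norm_div, norm_mul, norm_neg, norm_pow,
      Complex.norm_real, Real.norm_eq_abs, habs_conj]
    rw [abs_of_pos hD, abs_of_pos hWpos, hc1]
    rw [abs_of_pos hεd]
    ring
  have hvΔh : vnorm Δh = c1 * ‖s‖ / W := by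
    unfold vnorm
    have e : ∀ j, ‖Δh j‖^2
        = (c1 * ‖s‖ / W^2)^2 * ‖w j‖^2 := by
      intro j; rw [habsΔh j]; ring
    rw [Finset.sum_congr rfl fun j _ => e j, ← Finset.mul_sum, ← hW2]
    rw [show (c1 * ‖s‖ / W^2)^2 * W^2 = (c1 * ‖s‖ / W)^2 by
      field_simp]
    exact Real.sqrt_sq (by positivity)
  have h1 : vnorm Δh ≤ εd := by
    rw [hvΔh]
    have hle : c1 * ‖s‖ / W ≤ c1 * (D * W) / W := by gcongr
    have hc1D : c1 * D = εd := by rw [hc1]; field_simp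
    calc c1 * ‖s‖ / W ≤ c1 * (D * W) / W := hle
      _ = c1 * D := by rw [mul_div_assoc, mul_div_cancel_right₀ _ hWpos.ne']
      _ = εd := hc1D
  -- second norm bound
  have habsΔZ : ∀ i j, ‖ΔZ i j‖
      = c2 * ‖s‖ * ‖w j‖ / W^2 := by
    intro i j
    rw [hΔZ]
    simp only [← hEC, norm_div, norm_mul, norm_neg, norm_pow,
      Complex.norm_real, Real.norm_eq_abs, Complex.norm_conj, hv i, ← hsdef]
    rw [abs_of_pos hEpos, abs_of_pos hWpos, hc2]
    rw [abs_of_pos hεc]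
    ring
  have hc2' : 0 ≤ c2 * ‖s‖ / W^2 := by positivity
  have hfΔZ : fnorm ΔZ = Real.sqrt m * c2 * ‖s‖ / W := by
    unfold fnorm
    have e : ∀ i, ∑ j, ‖ΔZ i j‖^2
        = (c2 * ‖s‖ / W^2)^2 * W^2 := by
      intro i
      have e2 : ∀ j, ‖ΔZ i j‖^2
          = (c2 * ‖s‖ / W^2)^2 * ‖w j‖^2 := by
        intro j; rw [habsΔZ i j]; ring
      rw [Finset.sum_congr rfl fun j _ => e2 j, ← Finset.mul_sum, ← hW2]
    rw [Finset.sum_congr rfl fun i _ => e i, Finset.sum_const, Finset.card_univ,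
      Fintype.card_fin, nsmul_eq_mul]
    rw [show (m:ℝ) * ((c2 * ‖s‖ / W^2)^2 * W^2)
        = (Real.sqrt m * c2 * ‖s‖ / W)^2 by
      field_simp
      rw [Real.sq_sqrt (by positivity : (0:ℝ) ≤ (m:ℝ))]
      ring]
    exact Real.sqrt_sq (by positivity)
  have h2 : fnorm ΔZ ≤ εc := by
    rw [hfΔZ]
    have hle : Real.sqrt m * c2 * ‖s‖ / W
        ≤ Real.sqrt m * c2 * (D * W) / W := by gcongr
    have hc2D : Real.sqrt m * c2 * D = εc := by
      rw [hc2, hden2]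
      field_simp
    calc Real.sqrt m * c2 * ‖s‖ / W
        ≤ Real.sqrt m * c2 * (D * W) / W := hle
      _ = Real.sqrt m * c2 * D := by
          rw [mul_div_assoc, mul_div_cancel_right₀ _ hWpos.ne']
      _ = εc := hc2D
  exact ⟨h1, h2, hzero⟩
end
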